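/- Fix M > 1 and a sign σ ∈ {+1, −1}. There exists a constant C > 0 such that for all ξ ∈ ℝ with ξ ≠ 0 and all η ∈ ℝ, ∫_ℝ ⟨(θ² + σ η²)/ξ⟩^{−M} dθ ≤ C |ξ|^{1/2} ⟨η²/ξ⟩^{−1/2}. -/

import Mathlib

open MeasureTheory
open scoped ENNReal

/-- Japanese bracket `⟨x⟩ = (1 + x²)^{1/2}`. -/
noncomputable def jap (x : ℝ) : ℝ := Real.sqrt (1 + x ^ 2)

lemma jap_pos (x : ℝ) : 0 < jap x := Real.sqrt_pos.mpr (by positivity)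
lemma jap_mono {x y : ℝ} (hx : 0 ≤ x) (h : x ≤ y) : jap x ≤ jap y :=
  Real.sqrt_le_sqrt (by nlinarith)
lemma le_jap {c x : ℝ} (hc : 0 ≤ c) (h : c ^ 2 ≤ 1 + x ^ 2) : c ≤ jap x :=
  (Real.le_sqrt hc (by positivity)).mpr h
lemma rpow_div_helper {y c e : ℝ} (hy : 0 ≤ y) (hc : 0 < c) :
    (y / c) ^ (-e) = c ^ e * y ^ (-e) := by
  rw [div_eq_mul_inv, Real.mul_rpow hy (inv_nonneg.2 hc.le), Real.inv_rpow hc.le,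
    Real.rpow_neg hc.le, inv_inv, mul_comm]
lemma sq_collapse {t e : ℝ} (ht : 0 ≤ t) : (t ^ 2) ^ e = t ^ (2 * e) := by
  rw [← Real.rpow_natCast t 2, ← Real.rpow_mul ht]; norm_num

lemma P1 {M b s : ℝ} (hM : 1 ≤ M) (hb : 0 ≤ b) :
    jap (s ^ 2 + b) ^ (-M) ≤ (jap b ^ (-(1:ℝ)/2) * (8:ℝ) ^ M) * (1 + |s|) ^ (-M) := by
  have ht : (0:ℝ) ≤ |s| := abs_nonneg s
  have hM0 : (0:ℝ) ≤ M := by linarith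
  have h1 : jap b ≤ jap (s ^ 2 + b) := jap_mono hb (by nlinarith)
  have h2 : (1 + |s|) ^ 2 / 4 ≤ jap (s ^ 2 + b) := by
    apply le_jap (by positivity)
    have hs : s ^ 2 = |s| ^ 2 := (sq_abs s).symm
    nlinarith [sq_nonneg (|s| - 1), sq_nonneg (|s| ^ 2 - 1), sq_nonneg (|s| ^ 2 - |s|),
      sq_nonneg (s ^ 2 + b), mul_nonneg hb (sq_nonneg s), sq_nonneg b, mul_nonneg hb hb]
  have hsplit : jap (s ^ 2 + b) ^ (-M)
      = jap (s ^ 2 + b) ^ (-(1:ℝ)/2) * jap (s ^ 2 + b) ^ (-(M - 1/2)) := by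
    rw [← Real.rpow_add (jap_pos _)]; ring_nf
  rw [hsplit, mul_assoc]
  have e1 : jap (s ^ 2 + b) ^ (-(1:ℝ)/2) ≤ jap b ^ (-(1:ℝ)/2) :=
    Real.rpow_le_rpow_of_nonpos (jap_pos b) h1 (by norm_num)
  have e2 : jap (s ^ 2 + b) ^ (-(M - 1/2)) ≤ (8:ℝ) ^ M * (1 + |s|) ^ (-M) := by
    have p0 : (0:ℝ) < (1 + |s|) ^ 2 / 4 := by positivity
    refine (Real.rpow_le_rpow_of_nonpos p0 h2 (by linarith)).trans ?_
    rw [rpow_div_helper (by positivity) (show (0:ℝ) < 4 by norm_num),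
      sq_collapse (by positivity : (0:ℝ) ≤ 1 + |s|)]
    apply mul_le_mul
    · calc (4:ℝ) ^ (M - 1/2) ≤ 4 ^ M :=
            Real.rpow_le_rpow_of_exponent_le (by norm_num) (by linarith)
        _ ≤ 8 ^ M := Real.rpow_le_rpow (by norm_num) (by norm_num) hM0
    · exact Real.rpow_le_rpow_of_exponent_le (by linarith) (by linarith)
    · exact Real.rpow_nonneg (by positivity) _
    · exact Real.rpow_nonneg (by positivity) _
  exact mul_le_mul e1 e2 (Real.rpow_nonneg (jap_pos _).le _) (Real.rpow_nonneg (jap_pos _).le _)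

lemma P2 {M b s : ℝ} (hM : 1 ≤ M) (hb1 : -1 ≤ b) (hb0 : b ≤ 0) :
    jap (s ^ 2 + b) ^ (-M) ≤ (8:ℝ) ^ M * (1 + |s|) ^ (-M) := by
  have ht : (0:ℝ) ≤ |s| := abs_nonneg s
  have hM0 : (0:ℝ) ≤ M := by linarith
  have h2 : (1 + |s|) ^ 2 / 8 ≤ jap (s ^ 2 + b) := by
    apply le_jap (by positivity)
    have hs : s ^ 2 = |s| ^ 2 := (sq_abs s).symm
    rcases le_total (|s|) (3/2) with h | h
    · nlinarith [sq_nonneg (s ^ 2 + b), sq_nonneg (|s| - 1)]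
    · nlinarith [sq_nonneg (|s| - 1), sq_nonneg (|s| ^ 2 - 1), mul_nonneg (neg_nonneg.2 hb0) (sq_nonneg s)]
  refine (Real.rpow_le_rpow_of_nonpos (by positivity) h2 (by linarith)).trans ?_
  rw [rpow_div_helper (by positivity) (show (0:ℝ) < 8 by norm_num),
    sq_collapse (by positivity : (0:ℝ) ≤ 1 + |s|)]
  exact mul_le_mul (le_refl _) (Real.rpow_le_rpow_of_exponent_le (by linarith) (by linarith))
    (by positivity) (by positivity)

lemma P3 {M b s d : ℝ} (hM : 1 ≤ M) (hb : b ≤ -1) (hd : d = Real.sqrt (-b)) :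
    jap (s ^ 2 + b) ^ (-M) ≤
      (2:ℝ) ^ M * ((1 + |d * s - d ^ 2|) ^ (-M) + (1 + |d * s + d ^ 2|) ^ (-M)) := by
  have hM0 : (0:ℝ) ≤ M := by linarith
  have hd0 : 0 ≤ d := hd ▸ Real.sqrt_nonneg _
  have hdsq : d ^ 2 = -b := by rw [hd]; exact Real.sq_sqrt (by linarith)
  have key : ∀ x : ℝ, 0 ≤ x → x ^ 2 ≤ (s ^ 2 + b) ^ 2 →
      jap (s ^ 2 + b) ^ (-M) ≤ (2:ℝ) ^ M * (1 + x) ^ (-M) := by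
    intro x hx hx2
    have h2 : (1 + x) / 2 ≤ jap (s ^ 2 + b) := by
      apply le_jap (by positivity)
      nlinarith [sq_nonneg (1 - x)]
    refine (Real.rpow_le_rpow_of_nonpos (by positivity) h2 (by linarith)).trans ?_
    rw [rpow_div_helper (by positivity) (show (0:ℝ) < 2 by norm_num)]
  rcases le_total 0 s with hs | hs
  · have h1 : jap (s ^ 2 + b) ^ (-M) ≤ (2:ℝ) ^ M * (1 + |d * s - d ^ 2|) ^ (-M) := by
      apply key _ (abs_nonneg _)
      have : (d * s - d ^ 2) ^ 2 ≤ (s ^ 2 + b) ^ 2 := by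
        have hb2 : s ^ 2 + b = (s - d) * (s + d) := by linear_combination hdsq
        rw [hb2]
        nlinarith [mul_nonneg (mul_nonneg hs hd0) (sq_nonneg (s - d)), sq_nonneg (s - d)]
      calc |d * s - d ^ 2| ^ 2 = (d * s - d ^ 2) ^ 2 := sq_abs _
        _ ≤ _ := this
    refine h1.trans ?_
    have : (0:ℝ) ≤ (1 + |d * s + d ^ 2|) ^ (-M) := by positivity
    nlinarith [Real.rpow_nonneg (show (0:ℝ) ≤ 2 by norm_num) M]
  · have h1 : jap (s ^ 2 + b) ^ (-M) ≤ (2:ℝ) ^ M * (1 + |d * s + d ^ 2|) ^ (-M) := by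
      apply key _ (abs_nonneg _)
      have : (d * s + d ^ 2) ^ 2 ≤ (s ^ 2 + b) ^ 2 := by
        have hb2 : s ^ 2 + b = (s - d) * (s + d) := by linear_combination hdsq
        rw [hb2]
        nlinarith [mul_nonneg (mul_nonneg (neg_nonneg.2 hs) hd0) (sq_nonneg (s + d)), sq_nonneg (s + d)]
      calc |d * s + d ^ 2| ^ 2 = (d * s + d ^ 2) ^ 2 := sq_abs _
        _ ≤ _ := this
    refine h1.trans ?_
    have : (0:ℝ) ≤ (1 + |d * s - d ^ 2|) ^ (-M) := by positivity
    nlinarith [Real.rpow_nonneg (show (0:ℝ) ≤ 2 by norm_num) M]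

lemma jap_le {x c : ℝ} (hc : 0 ≤ c) (h : 1 + x ^ 2 ≤ c ^ 2) : jap x ≤ c := by
  rw [jap, show c = Real.sqrt (c ^ 2) from (Real.sqrt_sq hc).symm]
  exact Real.sqrt_le_sqrt h

lemma jap_eq_of_sq {x y : ℝ} (h : x ^ 2 = y ^ 2) : jap x = jap y := by
  unfold jap; rw [h]

lemma two_rpow_half : (1:ℝ)/2 ≤ (2:ℝ) ^ (-(1:ℝ)/2) := by
  have h := Real.rpow_le_rpow_of_exponent_le (show (1:ℝ) ≤ 2 by norm_num)
    (show (-1:ℝ) ≤ -(1:ℝ)/2 by norm_num)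
  rw [Real.rpow_neg_one] at h
  linarith [h]

lemma lint_scale {f : ℝ → ℝ≥0∞} (hf : Measurable f) {a : ℝ} (ha : a ≠ 0) :
    ∫⁻ x : ℝ, f (a * x) = ENNReal.ofReal |a⁻¹| * ∫⁻ x, f x := by
  have h := lintegral_map (μ := (volume : Measure ℝ)) hf (measurable_const_mul a)
  rw [Real.map_volume_mul_left ha, lintegral_smul_measure] at h
  exact h.symm

lemma lint_affine {f : ℝ → ℝ≥0∞} (hf : Measurable f) {a : ℝ} (ha : a ≠ 0) (e : ℝ) :
    ∫⁻ x : ℝ, f (a * x + e) = ENNReal.ofReal |a⁻¹| * ∫⁻ x, f x := by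
  have h1 : (∫⁻ x : ℝ, f (a * x + e)) = ∫⁻ x : ℝ, (fun y => f (y + e)) (a * x) := rfl
  rw [h1, lint_scale (show Measurable fun y => f (y + e) from hf.comp (measurable_add_const e)) ha]
  congr 1
  exact lintegral_add_right_eq_self f e

lemma meas_g0 (M : ℝ) : Measurable fun u : ℝ => ENNReal.ofReal ((1 + |u|) ^ (-M)) := by
  have hc : Continuous fun u : ℝ => (1 + |u|) ^ (-M) :=
    Continuous.rpow_const (by continuity) (fun x => Or.inl (by positivity))
  exact hc.measurable.ennreal_ofReal

lemma hfin (M : ℝ) (hM : 1 < M) :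
    (∫⁻ u : ℝ, ENNReal.ofReal ((1 + |u|) ^ (-M))) ≠ ⊤ := by
  have h := finite_integral_one_add_norm (E := ℝ) (μ := volume) (r := M)
    (by simpa using hM)
  simp only [Real.norm_eq_abs] at h
  exact h.ne

lemma lemA (M : ℝ) (hM : 1 < M) : ∃ C > (0:ℝ), ∀ b : ℝ,
    (∫⁻ s : ℝ, ENNReal.ofReal (jap (s ^ 2 + b) ^ (-M))) ≤
      ENNReal.ofReal (C * jap b ^ (-(1:ℝ)/2)) := by
  have hM0 : (0:ℝ) ≤ M := by linarith
  set A : ℝ := (∫⁻ u : ℝ, ENNReal.ofReal ((1 + |u|) ^ (-M))).toReal with hAdef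
  have hA0 : 0 ≤ A := ENNReal.toReal_nonneg
  have hAeq : (∫⁻ u : ℝ, ENNReal.ofReal ((1 + |u|) ^ (-M))) = ENNReal.ofReal A :=
    (ENNReal.ofReal_toReal (hfin M hM)).symm
  have h8 : (0:ℝ) < 8 ^ M := Real.rpow_pos_of_pos (by norm_num) M
  have h2M : (0:ℝ) < 2 ^ M := Real.rpow_pos_of_pos (by norm_num) M
  have h2le8 : (2:ℝ) ^ M ≤ 8 ^ M := Real.rpow_le_rpow (by norm_num) (by norm_num) hM0
  refine ⟨8 ^ M * 8 * (A + 1), by positivity, fun b => ?_⟩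
  have hjb : 0 < jap b ^ (-(1:ℝ)/2) := Real.rpow_pos_of_pos (jap_pos b) _
  rcases le_or_gt 0 b with hb | hb
  · calc (∫⁻ s : ℝ, ENNReal.ofReal (jap (s ^ 2 + b) ^ (-M)))
        ≤ ∫⁻ s : ℝ, ENNReal.ofReal (jap b ^ (-(1:ℝ)/2) * 8 ^ M) *
            ENNReal.ofReal ((1 + |s|) ^ (-M)) := by
          refine lintegral_mono fun s => ?_
          rw [← ENNReal.ofReal_mul (mul_nonneg hjb.le h8.le)]
          exact ENNReal.ofReal_le_ofReal (P1 hM.le hb)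
      _ = ENNReal.ofReal (jap b ^ (-(1:ℝ)/2) * 8 ^ M) * ENNReal.ofReal A := by
          rw [lintegral_const_mul' _ _ ENNReal.ofReal_ne_top, hAeq]
      _ = ENNReal.ofReal (jap b ^ (-(1:ℝ)/2) * 8 ^ M * A) := by
          rw [← ENNReal.ofReal_mul (mul_nonneg hjb.le h8.le)]
      _ ≤ ENNReal.ofReal (8 ^ M * 8 * (A + 1) * jap b ^ (-(1:ℝ)/2)) := by
          apply ENNReal.ofReal_le_ofReal
          nlinarith [mul_pos h8 hjb, hA0]
  · rcases le_or_gt (-1) b with hb1 | hb1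
    · have hjb2 : jap b ≤ 2 := jap_le (by norm_num) (by nlinarith)
      have hjbh : (1:ℝ)/2 ≤ jap b ^ (-(1:ℝ)/2) := by
        have h1 : (2:ℝ) ^ (-(1:ℝ)/2) ≤ jap b ^ (-(1:ℝ)/2) :=
          Real.rpow_le_rpow_of_nonpos (jap_pos b) hjb2 (by norm_num)
        linarith [two_rpow_half]
      calc (∫⁻ s : ℝ, ENNReal.ofReal (jap (s ^ 2 + b) ^ (-M)))
          ≤ ∫⁻ s : ℝ, ENNReal.ofReal ((8:ℝ) ^ M) *
              ENNReal.ofReal ((1 + |s|) ^ (-M)) := by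
            refine lintegral_mono fun s => ?_
            rw [← ENNReal.ofReal_mul h8.le]
            exact ENNReal.ofReal_le_ofReal (P2 hM.le hb1 hb.le)
        _ = ENNReal.ofReal ((8:ℝ) ^ M * A) := by
            rw [lintegral_const_mul' _ _ ENNReal.ofReal_ne_top, hAeq,
              ← ENNReal.ofReal_mul h8.le]
        _ ≤ ENNReal.ofReal (8 ^ M * 8 * (A + 1) * jap b ^ (-(1:ℝ)/2)) := by
            apply ENNReal.ofReal_le_ofReal
            have key : A ≤ 8 * (A + 1) * (jap b ^ (-(1:ℝ)/2)) := by
              nlinarith [mul_nonneg (show (0:ℝ) ≤ A + 1 by linarith)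
                (show (0:ℝ) ≤ jap b ^ (-(1:ℝ)/2) - 1/2 by linarith)]
            nlinarith [mul_le_mul_of_nonneg_left key h8.le]
    · set d := Real.sqrt (-b) with hd
      have hd1 : (1:ℝ) ≤ d := by
        rw [hd]
        exact (Real.le_sqrt (by norm_num) (by linarith)).mpr (by nlinarith)
      have hd0 : (0:ℝ) < d := lt_of_lt_of_le one_pos hd1
      have hdsq : d ^ 2 = -b := by rw [hd]; exact Real.sq_sqrt (by linarith)
      have hmeas1 : Measurable fun s : ℝ =>
          ENNReal.ofReal ((1 + |d * s - d ^ 2|) ^ (-M)) := by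
        have hc : Continuous fun s : ℝ => (1 + |d * s - d ^ 2|) ^ (-M) :=
          Continuous.rpow_const (by fun_prop) (fun x => Or.inl (by positivity))
        exact hc.measurable.ennreal_ofReal
      have I1 : (∫⁻ s : ℝ, ENNReal.ofReal ((1 + |d * s + -(d ^ 2)|) ^ (-M)))
          = ENNReal.ofReal |d⁻¹| * (∫⁻ u : ℝ, ENNReal.ofReal ((1 + |u|) ^ (-M))) :=
        lint_affine (meas_g0 M) (ne_of_gt hd0) (-(d ^ 2))
      have I2 : (∫⁻ s : ℝ, ENNReal.ofReal ((1 + |d * s + d ^ 2|) ^ (-M)))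
          = ENNReal.ofReal |d⁻¹| * (∫⁻ u : ℝ, ENNReal.ofReal ((1 + |u|) ^ (-M))) :=
        lint_affine (meas_g0 M) (ne_of_gt hd0) (d ^ 2)
      have habs : |d⁻¹| = d⁻¹ := abs_of_pos (inv_pos.mpr hd0)
      have hjb3 : jap b ≤ 2 * d ^ 2 := by
        apply jap_le (by positivity)
        nlinarith [hdsq, hd1, sq_nonneg (d ^ 2 - 1)]
      have h6 : d⁻¹ ≤ 2 * jap b ^ (-(1:ℝ)/2) := by
        have h4 : (2 * d ^ 2 : ℝ) ^ (-(1:ℝ)/2) ≤ jap b ^ (-(1:ℝ)/2) :=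
          Real.rpow_le_rpow_of_nonpos (jap_pos b) hjb3 (by norm_num)
        have h5 : (2 * d ^ 2 : ℝ) ^ (-(1:ℝ)/2) = (2:ℝ) ^ (-(1:ℝ)/2) * d⁻¹ := by
          rw [Real.mul_rpow (by norm_num) (sq_nonneg d), sq_collapse hd0.le,
            show (2:ℝ) * (-(1:ℝ)/2) = -1 by norm_num, Real.rpow_neg_one]
        have h7 : (1:ℝ)/2 * d⁻¹ ≤ jap b ^ (-(1:ℝ)/2) := by
          calc (1:ℝ)/2 * d⁻¹ ≤ (2:ℝ) ^ (-(1:ℝ)/2) * d⁻¹ :=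
                mul_le_mul_of_nonneg_right two_rpow_half (inv_nonneg.mpr hd0.le)
            _ = (2 * d ^ 2 : ℝ) ^ (-(1:ℝ)/2) := h5.symm
            _ ≤ _ := h4
        linarith
      calc (∫⁻ s : ℝ, ENNReal.ofReal (jap (s ^ 2 + b) ^ (-M)))
          ≤ ∫⁻ s : ℝ, ENNReal.ofReal ((2:ℝ) ^ M) *
              (ENNReal.ofReal ((1 + |d * s - d ^ 2|) ^ (-M)) +
               ENNReal.ofReal ((1 + |d * s + d ^ 2|) ^ (-M))) := by
            refine lintegral_mono fun s => ?_
            rw [← ENNReal.ofReal_add (Real.rpow_nonneg (by positivity) _)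
              (Real.rpow_nonneg (by positivity) _), ← ENNReal.ofReal_mul h2M.le]
            exact ENNReal.ofReal_le_ofReal (P3 hM.le hb1.le hd)
        _ = ENNReal.ofReal ((2:ℝ) ^ M) *
            ((∫⁻ s : ℝ, ENNReal.ofReal ((1 + |d * s - d ^ 2|) ^ (-M))) +
             (∫⁻ s : ℝ, ENNReal.ofReal ((1 + |d * s + d ^ 2|) ^ (-M)))) := by
            rw [lintegral_const_mul' _ _ ENNReal.ofReal_ne_top, lintegral_add_left hmeas1]
        _ = ENNReal.ofReal ((2:ℝ) ^ M * (d⁻¹ * A + d⁻¹ * A)) := by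
            simp_rw [sub_eq_add_neg]
            rw [I1, I2, hAeq, habs,
              ← ENNReal.ofReal_mul (inv_nonneg.mpr hd0.le),
              ← ENNReal.ofReal_add (mul_nonneg (inv_nonneg.mpr hd0.le) hA0)
                (mul_nonneg (inv_nonneg.mpr hd0.le) hA0),
              ← ENNReal.ofReal_mul h2M.le]
        _ ≤ ENNReal.ofReal (8 ^ M * 8 * (A + 1) * jap b ^ (-(1:ℝ)/2)) := by
            apply ENNReal.ofReal_le_ofReal
            have k1 : d⁻¹ * A ≤ 2 * (jap b ^ (-(1:ℝ)/2)) * A :=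
              mul_le_mul_of_nonneg_right h6 hA0
            have k2 : (2:ℝ) ^ M * (d⁻¹ * A + d⁻¹ * A) ≤
                (2:ℝ) ^ M * (4 * (jap b ^ (-(1:ℝ)/2)) * A) :=
              mul_le_mul_of_nonneg_left (by linarith) h2M.le
            have k3 : (2:ℝ) ^ M * (4 * (jap b ^ (-(1:ℝ)/2)) * A) ≤
                (8:ℝ) ^ M * (4 * (jap b ^ (-(1:ℝ)/2)) * A) :=
              mul_le_mul_of_nonneg_right h2le8
                (mul_nonneg (mul_nonneg (by norm_num) hjb.le) hA0)
            have k4 : (8:ℝ) ^ M * (4 * (jap b ^ (-(1:ℝ)/2)) * A) ≤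
                8 ^ M * 8 * (A + 1) * jap b ^ (-(1:ℝ)/2) := by
              nlinarith [mul_pos h8 hjb, hA0]
            linarith

/-- For `M > 1` and a sign `σ = ±1`:
`∫_ℝ ⟨(θ² + ση²)/ξ⟩^{−M} dθ ≤ C |ξ|^{1/2} ⟨η²/ξ⟩^{−1/2}` for all `ξ ≠ 0` and `η`. -/
theorem stmt7 (M σ : ℝ) (hM : 1 < M) (hσ : σ = 1 ∨ σ = -1) :
    ∃ C > (0:ℝ), ∀ ξ η : ℝ, ξ ≠ 0 →
      ∫⁻ θ : ℝ, ENNReal.ofReal (jap ((θ ^ 2 + σ * η ^ 2) / ξ) ^ (-M)) ≤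
        ENNReal.ofReal (C * |ξ| ^ ((1:ℝ)/2) * jap (η ^ 2 / ξ) ^ (-(1:ℝ)/2)) := by
  obtain ⟨C, hC, hbound⟩ := lemA M hM
  refine ⟨C, hC, fun ξ η hξ => ?_⟩
  have hσ2 : σ ^ 2 = 1 := by rcases hσ with h | h <;> simp [h]
  have hxa : 0 < |ξ| := abs_pos.mpr hξ
  set a : ℝ := Real.sqrt |ξ| with ha
  have ha0 : 0 < a := Real.sqrt_pos.mpr hxa
  have hasq : a ^ 2 = |ξ| := Real.sq_sqrt hxa.le
  set b : ℝ := σ * η ^ 2 / |ξ| with hbdef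
  have key : ∀ θ : ℝ, jap ((θ ^ 2 + σ * η ^ 2) / ξ) = jap ((a⁻¹ * θ) ^ 2 + b) := by
    intro θ
    apply jap_eq_of_sq
    have h1 : (a⁻¹ * θ) ^ 2 + b = (θ ^ 2 + σ * η ^ 2) / |ξ| := by
      have h0 : (a⁻¹ * θ) ^ 2 = θ ^ 2 / |ξ| := by
        rw [mul_pow, inv_pow, hasq]; ring
      rw [h0, hbdef, ← add_div]
    rw [h1, div_pow, div_pow, sq_abs]
  have hmeas : Measurable fun s : ℝ => ENNReal.ofReal (jap (s ^ 2 + b) ^ (-M)) := by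
    have hc0 : Continuous fun s : ℝ => jap (s ^ 2 + b) := by
      unfold jap; fun_prop
    have hc : Continuous fun s : ℝ => jap (s ^ 2 + b) ^ (-M) :=
      Continuous.rpow_const hc0 (fun x => Or.inl (jap_pos _).ne')
    exact hc.measurable.ennreal_ofReal
  have hscale : (∫⁻ θ : ℝ, ENNReal.ofReal (jap ((a⁻¹ * θ) ^ 2 + b) ^ (-M)))
      = ENNReal.ofReal |a⁻¹⁻¹| * ∫⁻ s : ℝ, ENNReal.ofReal (jap (s ^ 2 + b) ^ (-M)) :=
    lint_scale hmeas (inv_ne_zero (ne_of_gt ha0))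
  calc (∫⁻ θ : ℝ, ENNReal.ofReal (jap ((θ ^ 2 + σ * η ^ 2) / ξ) ^ (-M)))
      = ∫⁻ θ : ℝ, ENNReal.ofReal (jap ((a⁻¹ * θ) ^ 2 + b) ^ (-M)) := by
        simp_rw [key]
    _ = ENNReal.ofReal |a⁻¹⁻¹| * ∫⁻ s : ℝ, ENNReal.ofReal (jap (s ^ 2 + b) ^ (-M)) :=
        hscale
    _ ≤ ENNReal.ofReal a * ENNReal.ofReal (C * jap b ^ (-(1:ℝ)/2)) := by
        rw [inv_inv, abs_of_pos ha0]
        exact mul_le_mul_right (hbound b) _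
    _ = ENNReal.ofReal (a * (C * jap b ^ (-(1:ℝ)/2))) :=
        (ENNReal.ofReal_mul ha0.le).symm
    _ = ENNReal.ofReal (C * |ξ| ^ ((1:ℝ)/2) * jap (η ^ 2 / ξ) ^ (-(1:ℝ)/2)) := by
        congr 1
        have h2 : jap b = jap (η ^ 2 / ξ) := by
          apply jap_eq_of_sq
          rw [div_pow, div_pow, mul_pow, hσ2, one_mul, sq_abs]
        have h3 : |ξ| ^ ((1:ℝ)/2) = a := by
          rw [ha, Real.sqrt_eq_rpow]
        rw [h2, h3]
        ring
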